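/- Let F_q be a finite field of characteristic p. For every real ε > 0 there exists N such that for every prime n > N with n ≠ p, the number of polynomials g ∈ F_q[X] of degree strictly less than n whose image in F_q[X]/(Q_n) is a unit is at least (1 − ε)·q^n. In other words, the quota of D-complicated sequences of prime length n tends to 1 as n → ∞. -/

import Mathlib

open Polynomial

section Aux

variable {F : Type*} [Field F] [Fintype F]

theorem aux_unit_iff_coprime {R : Type*} [CommRing R] (Q g : R) :
    IsUnit (Ideal.Quotient.mk (Ideal.span {Q}) g) ↔ IsCoprime g Q := by
  constructor
  · intro hu
    obtain ⟨v, hv⟩ := isUnit_iff_exists_inv.mp hu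
    obtain ⟨a, ha⟩ := Ideal.Quotient.mk_surjective v
    have h1 : Ideal.Quotient.mk (Ideal.span {Q}) (g * a) = 1 := by
      rw [map_mul, ha, hv]
    rw [← map_one (Ideal.Quotient.mk (Ideal.span {Q})), Ideal.Quotient.eq,
      Ideal.mem_span_singleton] at h1
    obtain ⟨b, hb⟩ := h1
    exact ⟨a, -b, by linear_combination hb⟩
  · rintro ⟨a, b, hab⟩
    refine IsUnit.of_mul_eq_one (Ideal.Quotient.mk _ a) ?_
    rw [← map_mul, ← map_one (Ideal.Quotient.mk (Ideal.span {Q})), Ideal.Quotient.eq,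
      Ideal.mem_span_singleton]
    exact ⟨-b, by linear_combination hab⟩

theorem aux_card_degLT (F : Type*) [Field F] [Fintype F] (m : ℕ) :
    Nat.card {g : F[X] // g.degree < (m : WithBot ℕ)} = Fintype.card F ^ m := by
  have e1 : {g : F[X] // g.degree < (m : WithBot ℕ)} ≃ (degreeLT F m) :=
    Equiv.subtypeEquivRight fun g => (Polynomial.mem_degreeLT).symm
  have e2 := (Polynomial.degreeLTEquiv F m).toEquiv
  rw [Nat.card_congr (e1.trans e2)]
  simp [Nat.card_eq_fintype_card]

theorem aux_finite_degLT (F : Type*) [Field F] [Fintype F] (m : ℕ) :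
    {g : F[X] | g.degree < (m : WithBot ℕ)}.Finite := by
  have e1 : {g : F[X] // g.degree < (m : WithBot ℕ)} ≃ (degreeLT F m) :=
    Equiv.subtypeEquivRight fun g => (Polynomial.mem_degreeLT).symm
  have : Finite {g : F[X] // g.degree < (m : WithBot ℕ)} :=
    Finite.of_equiv _ (e1.trans (Polynomial.degreeLTEquiv F m).toEquiv).symm
  exact this

theorem aux_card_multiples (F : Type*) [Field F] [Fintype F] (n : ℕ) (f : F[X])
    (hf : f ≠ 0) (hd : f.natDegree ≤ n) :
    Nat.card {g : F[X] // g.degree < (n : WithBot ℕ) ∧ f ∣ g}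
      = Fintype.card F ^ (n - f.natDegree) := by
  classical
  set d := f.natDegree with hdd
  have hbij : Function.Bijective
      (fun h : {h : F[X] // h.degree < ((n - d : ℕ) : WithBot ℕ)} =>
        (⟨f * h.1, by
          constructor
          · rcases eq_or_ne h.1 0 with h0 | h0
            · simp [h0]
            · rw [degree_eq_natDegree (mul_ne_zero hf h0)]
              have : h.1.natDegree < n - d := by
                have := h.2
                rwa [← natDegree_lt_iff_degree_lt h0] at this
              rw [natDegree_mul hf h0]
              exact_mod_cast by omega
          · exact Dvd.intro _ rfl⟩ :
          {g : F[X] // g.degree < (n : WithBot ℕ) ∧ f ∣ g})) := by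
    constructor
    · rintro ⟨h1, hh1⟩ ⟨h2, hh2⟩ he
      have : f * h1 = f * h2 := congrArg Subtype.val he
      exact Subtype.ext (mul_left_cancel₀ hf this)
    · rintro ⟨g, hg, c, hc⟩
      refine ⟨⟨c, ?_⟩, Subtype.ext hc.symm⟩
      rcases eq_or_ne c 0 with h0 | h0
      · simp [h0]
      · have hg0 : g ≠ 0 := by rw [hc]; exact mul_ne_zero hf h0
        rw [← natDegree_lt_iff_degree_lt hg0, hc, natDegree_mul hf h0] at hg
        rw [← natDegree_lt_iff_degree_lt h0]
        exact_mod_cast by omega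
  rw [← Nat.card_eq_of_bijective _ hbij]
  exact aux_card_degLT F (n - d)

theorem aux_ncard_biUnion_le {α ι : Type*} (S : Finset ι) (t : ι → Set α) :
    (⋃ i ∈ S, t i).ncard ≤ ∑ i ∈ S, (t i).ncard := by
  classical
  induction S using Finset.induction with
  | empty => simp
  | insert a s hx ih =>
    rw [Finset.set_biUnion_insert, Finset.sum_insert hx]
    exact le_trans (Set.ncard_union_le _ _) (by omega)

theorem aux_factor_deg {F : Type*} [Field F] [Fintype F] (p : ℕ) [Fact p.Prime] [CharP F p]
    (n : ℕ) (hn : n.Prime) (hnp : n ≠ p) (f : F[X]) (hirr : Irreducible f)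
    (hdvd : f ∣ (∑ i ∈ Finset.range n, X ^ i : F[X])) :
    n < Fintype.card F ^ f.natDegree := by
  classical
  haveI : Fact (Irreducible f) := ⟨hirr⟩
  haveI : Fact n.Prime := ⟨hn⟩
  set K := AdjoinRoot f
  haveI : CharP K p := charP_of_injective_algebraMap (algebraMap F K).injective p
  set x : K := AdjoinRoot.root f with hx
  have hQ : (aeval x) (∑ i ∈ Finset.range n, X ^ i : F[X]) = 0 := by
    rw [AdjoinRoot.aeval_eq, AdjoinRoot.mk_eq_zero]; exact hdvd
  have hQx : (∑ i ∈ Finset.range n, x ^ i) = 0 := by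
    simpa [map_sum] using hQ
  have hxn : x ^ n = 1 := by
    have := geom_sum_mul x n
    rw [hQx, zero_mul] at this
    linear_combination -this
  have hx1 : x ≠ 1 := by
    intro h
    rw [h] at hQx
    simp only [one_pow, Finset.sum_const, Finset.card_range, nsmul_eq_mul, mul_one] at hQx
    have : (p : ℕ) ∣ n := (CharP.cast_eq_zero_iff K p n).mp hQx
    rcases (Nat.prime_dvd_prime_iff_eq (Fact.out) hn).mp this with rfl
    exact hnp rfl
  have hx0 : x ≠ 0 := by
    intro h
    rw [h] at hxn
    simp [zero_pow hn.ne_zero] at hxn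
  let b := AdjoinRoot.powerBasisAux (K := F) hirr.ne_zero
  haveI : Fintype K := Module.fintypeOfFintype b
  have hcard : Fintype.card K = Fintype.card F ^ f.natDegree := by
    rw [Module.card_fintype b, Fintype.card_fin]
  have horder : orderOf x = n := orderOf_eq_prime hxn hx1
  set u : Kˣ := Units.mk0 x hx0
  have horderu : orderOf u = n := by
    rw [← orderOf_units (y := u)]
    exact horder
  have hdvd' : n ∣ Fintype.card Kˣ := horderu ▸ orderOf_dvd_card
  rw [Fintype.card_units, hcard] at hdvd'
  have h2 : 2 ≤ Fintype.card F := Fintype.one_lt_card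
  have hd1 : 1 ≤ f.natDegree := hirr.natDegree_pos
  have hq : 2 ≤ Fintype.card F ^ f.natDegree :=
    le_trans h2 (Nat.le_self_pow (by omega) _)
  have := Nat.le_of_dvd (by omega) hdvd'
  omega

end Aux

theorem stmt5 {F : Type*} [Field F] [Fintype F] (p : ℕ) [Fact p.Prime] [CharP F p] :
    ∀ ε : ℝ, 0 < ε → ∃ N : ℕ, ∀ n : ℕ, n.Prime → N < n → n ≠ p →
      (1 - ε) * (Fintype.card F : ℝ) ^ n ≤
        (Nat.card {g : F[X] // g.degree < (n : WithBot ℕ) ∧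
          IsUnit (Ideal.Quotient.mk
            (Ideal.span {(∑ i ∈ Finset.range n, X ^ i : F[X])}) g)} : ℝ) := by
  classical
  intro ε hε
  set q := Fintype.card F with hq
  have hq2 : 2 ≤ q := Fintype.one_lt_card
  set k : ℕ := ⌈1 / ε⌉₊ with hk
  refine ⟨q ^ k, ?_⟩
  intro n hn hNn hnp
  set Q : F[X] := (∑ i ∈ Finset.range n, X ^ i) with hQdef
  have hn0 : n ≠ 0 := hn.ne_zero
  have hQmonic : Q.Monic := monic_geom_sum_X hn0
  have hQ0 : Q ≠ 0 := hQmonic.ne_zero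
  -- natDegree Q = n - 1
  have hQdeg : Q.natDegree = n - 1 := by
    have hmul : Q * (X - 1) = X ^ n - 1 := geom_sum_mul (X : F[X]) n
    have hX1 : (X - 1 : F[X]).natDegree = 1 := by
      have : (X - 1 : F[X]) = X - C 1 := by simp
      rw [this, natDegree_X_sub_C]
    have hXn : ((X : F[X]) ^ n - 1).natDegree = n := by
      have : ((X : F[X]) ^ n - 1) = X ^ n - C 1 := by simp
      rw [this, natDegree_X_pow_sub_C]
    have hX10 : (X - 1 : F[X]) ≠ 0 := by
      intro h
      have := congrArg natDegree h
      rw [hX1] at this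
      simp at this
    have := natDegree_mul hQ0 hX10
    rw [hmul, hXn, hX1] at this
    omega
  -- the factor set
  set S : Finset F[X] := (UniqueFactorizationMonoid.normalizedFactors Q).toFinset with hS
  have hSirr : ∀ f ∈ S, Irreducible f := fun f hf =>
    UniqueFactorizationMonoid.irreducible_of_normalized_factor f (Multiset.mem_toFinset.mp hf)
  have hSdvd : ∀ f ∈ S, f ∣ Q := fun f hf =>
    UniqueFactorizationMonoid.dvd_of_mem_normalizedFactors (Multiset.mem_toFinset.mp hf)
  -- sets
  set T : Set F[X] := {g | g.degree < (n : WithBot ℕ)} with hT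
  set U : Set F[X] := {g | g.degree < (n : WithBot ℕ) ∧
    IsUnit (Ideal.Quotient.mk (Ideal.span {Q}) g)} with hU
  set A : Set F[X] := {g | g.degree < (n : WithBot ℕ) ∧
    ¬ IsUnit (Ideal.Quotient.mk (Ideal.span {Q}) g)} with hA
  set B : F[X] → Set F[X] := fun f => {g | g.degree < (n : WithBot ℕ) ∧ f ∣ g} with hB
  have hTfin : T.Finite := aux_finite_degLT F n
  have hUfin : U.Finite := hTfin.subset (fun g hg => hg.1)
  have hAfin : A.Finite := hTfin.subset (fun g hg => hg.1)
  -- A covered by the B f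
  have hcover : A ⊆ ⋃ f ∈ S, B f := by
    rintro g ⟨hgdeg, hgnu⟩
    rw [aux_unit_iff_coprime] at hgnu
    have hgcd0 : EuclideanDomain.gcd g Q ≠ 0 := by
      intro h
      exact hQ0 (EuclideanDomain.gcd_eq_zero_iff.mp h).2
    have hgcdnu : ¬ IsUnit (EuclideanDomain.gcd g Q) := by
      intro h
      exact hgnu (EuclideanDomain.gcd_isUnit_iff.mp h)
    obtain ⟨r, hrirr, hrdvd⟩ :=
      WfDvdMonoid.exists_irreducible_factor hgcdnu hgcd0
    have hrg : r ∣ g := hrdvd.trans (EuclideanDomain.gcd_dvd_left g Q)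
    have hrQ : r ∣ Q := hrdvd.trans (EuclideanDomain.gcd_dvd_right g Q)
    obtain ⟨f, hfmem, hassoc⟩ :=
      UniqueFactorizationMonoid.exists_mem_normalizedFactors_of_dvd hQ0 hrirr hrQ
    refine Set.mem_biUnion (Multiset.mem_toFinset.mpr hfmem) ⟨hgdeg, ?_⟩
    exact hassoc.symm.dvd.trans hrg
  -- cardinalities
  have hTcard : T.ncard = q ^ n := by
    rw [← Nat.card_coe_set_eq]
    exact aux_card_degLT F n
  have hBcard : ∀ f ∈ S, (B f).ncard = q ^ (n - f.natDegree) := by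
    intro f hf
    rw [← Nat.card_coe_set_eq]
    exact aux_card_multiples F n f (hSirr f hf).ne_zero
      (le_trans (natDegree_le_of_dvd (hSdvd f hf) hQ0) (by omega))
  -- degree bounds for factors
  have hfdeg : ∀ f ∈ S, n < q ^ f.natDegree := fun f hf =>
    aux_factor_deg p n hn hnp f (hSirr f hf) (hSdvd f hf)
  have hfk : ∀ f ∈ S, k + 1 ≤ f.natDegree := by
    intro f hf
    by_contra h
    push_neg at h
    have : q ^ f.natDegree ≤ q ^ k :=
      Nat.pow_le_pow_right (by omega) (by omega)
    have := hfdeg f hf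
    omega
  -- sum of degrees ≤ n
  have hsumdeg : ∑ f ∈ S, f.natDegree ≤ n := by
    have hprod_dvd : (∏ f ∈ S, f) ∣ Q := by
      have h1 : (UniqueFactorizationMonoid.normalizedFactors Q).toFinset.prod id ∣
          (UniqueFactorizationMonoid.normalizedFactors Q).prod :=
        Multiset.toFinset_prod_dvd_prod _
      have h2 : (UniqueFactorizationMonoid.normalizedFactors Q).prod ∣ Q :=
        (UniqueFactorizationMonoid.prod_normalizedFactors hQ0).dvd
      simpa [hS, id] using h1.trans h2
    have hprod0 : (∏ f ∈ S, f) ≠ 0 := by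
      apply Finset.prod_ne_zero_iff.mpr
      intro f hf
      exact (hSirr f hf).ne_zero
    have := natDegree_le_of_dvd hprod_dvd hQ0
    rw [natDegree_prod _ _ (fun f hf => (hSirr f hf).ne_zero)] at this
    omega
  -- bound ncard A in ℝ
  have hqR : (0:ℝ) < (q:ℝ) := by positivity
  have hAbound : (A.ncard : ℝ) ≤ (∑ f ∈ S, (q:ℝ) ^ (n - f.natDegree)) := by
    have h1 : A.ncard ≤ (⋃ f ∈ S, B f).ncard :=
      Set.ncard_le_ncard hcover (hTfin.subset (by
        intro g hg
        simp only [Set.mem_iUnion] at hg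
        obtain ⟨f, _, hgf⟩ := hg
        exact hgf.1))
    have h2 : (⋃ f ∈ S, B f).ncard ≤ ∑ f ∈ S, (B f).ncard := aux_ncard_biUnion_le S B
    calc (A.ncard : ℝ) ≤ ((∑ f ∈ S, (B f).ncard : ℕ) : ℝ) := by exact_mod_cast h1.trans h2
      _ = ∑ f ∈ S, (q:ℝ) ^ (n - f.natDegree) := by
          push_cast
          exact Finset.sum_congr rfl fun f hf => by rw [hBcard f hf]; push_cast; ring
  -- each term bound
  have hterm : ∀ f ∈ S, (q:ℝ) ^ (n - f.natDegree) ≤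
      (f.natDegree : ℝ) * (q:ℝ) ^ n / ((k+1) * (n+1)) := by
    intro f hf
    have hd := hfdeg f hf
    have hdk := hfk f hf
    have hdlen : f.natDegree ≤ n := le_trans (natDegree_le_of_dvd (hSdvd f hf) hQ0) (by omega)
    have hpow : (q:ℝ) ^ (n - f.natDegree) * (q:ℝ) ^ f.natDegree = (q:ℝ) ^ n := by
      rw [← pow_add]
      congr 1
      omega
    have hqd : (n:ℝ) + 1 ≤ (q:ℝ) ^ f.natDegree := by exact_mod_cast hd
    have hpos : (0:ℝ) < ((k:ℝ)+1) * ((n:ℝ)+1) := by positivity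
    rw [le_div_iff₀ hpos]
    have h1 : ((k:ℝ)+1) ≤ (f.natDegree : ℝ) := by exact_mod_cast hdk
    calc (q:ℝ) ^ (n - f.natDegree) * (((k:ℝ)+1) * ((n:ℝ)+1))
        ≤ (q:ℝ) ^ (n - f.natDegree) * ((f.natDegree:ℝ) * (q:ℝ) ^ f.natDegree) := by
          apply mul_le_mul_of_nonneg_left _ (by positivity)
          exact mul_le_mul h1 hqd (by positivity) (by positivity)
      _ = (f.natDegree : ℝ) * ((q:ℝ) ^ (n - f.natDegree) * (q:ℝ) ^ f.natDegree) := by ring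
      _ = (f.natDegree : ℝ) * (q:ℝ) ^ n := by rw [hpow]
  -- total bound
  have hkε : 1 / ((k:ℝ)+1) ≤ ε := by
    have h1 : (1:ℝ)/ε ≤ (k:ℝ) := le_trans (Nat.le_ceil _) (by exact_mod_cast le_refl k)
    rw [div_le_iff₀ (by positivity)] at h1 ⊢
    nlinarith
  have hAtotal : (A.ncard : ℝ) ≤ ε * (q:ℝ) ^ n := by
    calc (A.ncard : ℝ) ≤ ∑ f ∈ S, (q:ℝ) ^ (n - f.natDegree) := hAbound
      _ ≤ ∑ f ∈ S, (f.natDegree : ℝ) * (q:ℝ) ^ n / ((k+1) * (n+1)) :=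
          Finset.sum_le_sum hterm
      _ = (∑ f ∈ S, (f.natDegree : ℝ)) * (q:ℝ) ^ n / ((k+1) * (n+1)) := by
          rw [Finset.sum_mul, Finset.sum_div]
      _ ≤ (n : ℝ) * (q:ℝ) ^ n / ((k+1) * (n+1)) := by
          gcongr
          exact_mod_cast hsumdeg
      _ ≤ (1 / ((k:ℝ)+1)) * (q:ℝ) ^ n := by
          rw [div_le_iff₀ (by positivity)]
          have heq : (1 / ((k:ℝ)+1)) * (q:ℝ)^n * (((k:ℝ)+1) * ((n:ℝ)+1))
              = (q:ℝ)^n * ((n:ℝ)+1) := by field_simp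
          rw [heq]
          nlinarith [pow_pos hqR n]
      _ ≤ ε * (q:ℝ) ^ n := by
          apply mul_le_mul_of_nonneg_right hkε (by positivity)
  -- partition
  have hUA : U ∪ A = T := by
    ext g
    simp only [hU, hA, hT, Set.mem_union, Set.mem_setOf_eq]
    tauto
  have hdisj : Disjoint U A := by
    rw [Set.disjoint_iff]
    rintro g ⟨⟨_, h1⟩, ⟨_, h2⟩⟩
    exact absurd h1 h2
  have hsum : U.ncard + A.ncard = q ^ n := by
    rw [← Set.ncard_union_eq hdisj hUfin hAfin, hUA, hTcard]
  -- conclude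
  have hgoal : (Nat.card {g : F[X] // g.degree < (n : WithBot ℕ) ∧
      IsUnit (Ideal.Quotient.mk (Ideal.span {Q}) g)} : ℝ) = (U.ncard : ℝ) := by
    rw [← Nat.card_coe_set_eq]
    rfl
  rw [hgoal]
  have hUncard : (U.ncard : ℝ) = (q:ℝ)^n - (A.ncard : ℝ) := by
    have h := congrArg (fun m : ℕ => (m : ℝ)) hsum
    push_cast at h
    linarith
  rw [hUncard]
  push_cast
  nlinarith [pow_pos hqR n]
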